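/- Let G be a finite simple graph of maximum degree at most 3 of order n admitting an unfriendly partition {A, B} with |A| ≠ |B|. Then R(G) ≤ 1, i.e., |λ_h(G)| ≤ 1 and |λ_l(G)| ≤ 1 where h = ⌊(n+1)/2⌋ and l = ⌈(n+1)/2⌉. -/

import Mathlib

open SimpleGraph Matrix

theorem adjMatrix_isHermitian {V : Type} [Fintype V] [DecidableEq V]
    (G : SimpleGraph V) [DecidableRel G.Adj] : (G.adjMatrix ℝ).IsHermitian := by
  ext i j
  simp [Matrix.conjTranspose_apply, SimpleGraph.adj_comm]

/-- Multiset of adjacency eigenvalues. -/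
noncomputable def adjSpectrum {V : Type} [Fintype V] [DecidableEq V]
    (G : SimpleGraph V) [DecidableRel G.Adj] : Multiset ℝ :=
  Finset.univ.val.map (adjMatrix_isHermitian G).eigenvalues

/-- the i-th largest adjacency eigenvalue (1-indexed). -/
noncomputable def eigval {V : Type} [Fintype V] [DecidableEq V]
    (G : SimpleGraph V) [DecidableRel G.Adj] (i : ℕ) : ℝ :=
  ((adjSpectrum G).sort (· ≤ ·)).getD (Fintype.card V - i) 0

section Aux

variable {V : Type} [Fintype V] [DecidableEq V]

open Finset in
/-- Parseval for ortho basis, in coordinates. -/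
private lemma my_parseval {M : Matrix V V ℝ} (hM : M.IsHermitian)
    (y z : EuclideanSpace ℝ V) :
    ∑ v, y v * z v = ∑ i, hM.eigenvectorBasis.repr y i * hM.eigenvectorBasis.repr z i := by
  have h : (inner ℝ y z : ℝ) = inner ℝ (hM.eigenvectorBasis.repr y) (hM.eigenvectorBasis.repr z) :=
    (hM.eigenvectorBasis.repr.inner_map_map y z).symm
  simp only [PiLp.inner_apply, RCLike.inner_apply, conj_trivial] at h
  simpa only [mul_comm] using h

open Finset in
private lemma my_repr_mulVec {M : Matrix V V ℝ} (hM : M.IsHermitian)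
    (x : EuclideanSpace ℝ V) (i : V) :
    hM.eigenvectorBasis.repr (WithLp.toLp 2 (M *ᵥ x : V → ℝ) : EuclideanSpace ℝ V) i
      = hM.eigenvalues i * hM.eigenvectorBasis.repr x i := by
  set B := hM.eigenvectorBasis with hB
  have hsym : ∀ v w, M v w = M w v := by
    intro v w
    conv_lhs => rw [← hM]
    simp [Matrix.conjTranspose_apply]
  have hr : ∀ (y : EuclideanSpace ℝ V) i, B.repr y i = ∑ v, (B i) v * y v := by
    intro y i
    rw [B.repr_apply_apply]
    simp [PiLp.inner_apply, starRingEnd_apply, star_trivial]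
    exact Finset.sum_congr rfl fun _ _ => mul_comm _ _
  rw [hr, hr]
  have hMB : M *ᵥ (B i : V → ℝ) = hM.eigenvalues i • (B i : V → ℝ) :=
    hM.mulVec_eigenvectorBasis i
  calc ∑ v, (B i) v * (M *ᵥ x) v
      = ∑ v, ∑ w, (B i) v * (M v w * x w) := by
        refine Finset.sum_congr rfl fun v _ => ?_
        rw [show (M *ᵥ x) v = ∑ w, M v w * x w from rfl, Finset.mul_sum]
    _ = ∑ w, (∑ v, M w v * (B i) v) * x w := by
        rw [Finset.sum_comm]
        refine Finset.sum_congr rfl fun w _ => ?_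
        rw [Finset.sum_mul]
        refine Finset.sum_congr rfl fun v _ => ?_
        rw [hsym v w]; ring
    _ = ∑ w, (M *ᵥ (B i : V → ℝ)) w * x w := rfl
    _ = ∑ w, (hM.eigenvalues i • (B i : V → ℝ)) w * x w := by rw [hMB]

    _ = hM.eigenvalues i * ∑ v, (B i) v * x v := by
        rw [Finset.mul_sum]
        refine Finset.sum_congr rfl fun w _ => ?_
        simp [Pi.smul_apply]; ring

open Finset in
private lemma my_quad_eq {M : Matrix V V ℝ} (hM : M.IsHermitian)
    (x : EuclideanSpace ℝ V) :
    ∑ v, x v * (M *ᵥ x) v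
      = ∑ i, hM.eigenvalues i * (hM.eigenvectorBasis.repr x i)^2 := by
  have h := my_parseval hM x (WithLp.toLp 2 (M *ᵥ x : V → ℝ) : EuclideanSpace ℝ V)
  refine Eq.trans h ?_
  refine Finset.sum_congr rfl fun i _ => ?_
  rw [my_repr_mulVec hM x i]; ring

open Finset in
private lemma count_eig_gt {M : Matrix V V ℝ} (hM : M.IsHermitian) (c : ℝ)
    (W : Submodule ℝ (EuclideanSpace ℝ V))
    (hW : ∀ x ∈ W, ∑ v, x v * (M *ᵥ x) v ≤ c * ∑ v, x v * x v) :
    (univ.filter fun i => c < hM.eigenvalues i).card + Module.finrank ℝ W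
      ≤ Fintype.card V := by
  by_contra hlt
  push_neg at hlt
  set B := hM.eigenvectorBasis with hBdef
  set T : Finset V := univ.filter fun i => c < hM.eigenvalues i with hT
  set P : Submodule ℝ (EuclideanSpace ℝ V) := Submodule.span ℝ (⇑B.toBasis '' ↑T) with hP
  have hli : LinearIndependent ℝ (fun i : (↑T : Set V) => B.toBasis i) :=
    B.toBasis.linearIndependent.comp _ Subtype.val_injective
  have hPrank : Module.finrank ℝ P = T.card := by
    rw [hP, Set.image_eq_range, finrank_span_eq_card hli, ← Set.toFinset_card]
    simp
  have hsup : Module.finrank ℝ ↥(P ⊔ W) ≤ Fintype.card V :=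
    le_trans (Submodule.finrank_le _) (le_of_eq finrank_euclideanSpace)
  have hdim := Submodule.finrank_sup_add_finrank_inf_eq P W
  have hpos : 0 < Module.finrank ℝ ↥(P ⊓ W) := by omega
  haveI : Nontrivial ↥(P ⊓ W) := Module.finrank_pos_iff.mp hpos
  obtain ⟨⟨x, hxPW⟩, hx0⟩ := exists_ne (0 : ↥(P ⊓ W))
  have hxP : x ∈ P := hxPW.1
  have hxW : x ∈ W := hxPW.2
  have hxne : x ≠ 0 := fun h => hx0 (Subtype.ext h)
  have hsupp : ∀ i, B.repr x i ≠ 0 → i ∈ T := by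
    intro i hi
    have := B.toBasis.mem_span_image.mp hxP
    apply this
    rw [Finset.mem_coe, Finsupp.mem_support_iff, B.coe_toBasis_repr_apply]
    exact hi
  obtain ⟨i0, hi0⟩ : ∃ i, B.repr x i ≠ 0 := by
    by_contra hall
    push_neg at hall
    apply hxne
    have : B.repr x = 0 := by ext i; exact hall i
    simpa using congrArg B.repr.symm this
  have hkey : c * ∑ v, x v * x v < ∑ v, x v * (M *ᵥ x) v := by
    rw [my_quad_eq hM x, my_parseval hM x x, Finset.mul_sum]
    apply Finset.sum_lt_sum
    · intro i _
      by_cases h : B.repr x i = 0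
      · simp [← hBdef, h]
      · have hiT := hsupp i h
        rw [hT, Finset.mem_filter] at hiT
        have : (0:ℝ) < (B.repr x i)^2 := by positivity
        nlinarith [hiT.2]
    · refine ⟨i0, Finset.mem_univ _, ?_⟩
      have hiT := hsupp i0 hi0
      rw [hT, Finset.mem_filter] at hiT
      have : (0:ℝ) < (B.repr x i0)^2 := by positivity
      nlinarith [hiT.2]
  exact absurd (hW x hxW) (not_le.mpr hkey)

open Finset in
private lemma count_eig_lt {M : Matrix V V ℝ} (hM : M.IsHermitian) (c : ℝ)
    (W : Submodule ℝ (EuclideanSpace ℝ V))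
    (hW : ∀ x ∈ W, c * ∑ v, x v * x v ≤ ∑ v, x v * (M *ᵥ x) v) :
    (univ.filter fun i => hM.eigenvalues i < c).card + Module.finrank ℝ W
      ≤ Fintype.card V := by
  by_contra hlt
  push_neg at hlt
  set B := hM.eigenvectorBasis with hBdef
  set T : Finset V := univ.filter fun i => hM.eigenvalues i < c with hT
  set P : Submodule ℝ (EuclideanSpace ℝ V) := Submodule.span ℝ (⇑B.toBasis '' ↑T) with hP
  have hli : LinearIndependent ℝ (fun i : (↑T : Set V) => B.toBasis i) :=
    B.toBasis.linearIndependent.comp _ Subtype.val_injective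
  have hPrank : Module.finrank ℝ P = T.card := by
    rw [hP, Set.image_eq_range, finrank_span_eq_card hli, ← Set.toFinset_card]
    simp
  have hsup : Module.finrank ℝ ↥(P ⊔ W) ≤ Fintype.card V :=
    le_trans (Submodule.finrank_le _) (le_of_eq finrank_euclideanSpace)
  have hdim := Submodule.finrank_sup_add_finrank_inf_eq P W
  have hpos : 0 < Module.finrank ℝ ↥(P ⊓ W) := by omega
  haveI : Nontrivial ↥(P ⊓ W) := Module.finrank_pos_iff.mp hpos
  obtain ⟨⟨x, hxPW⟩, hx0⟩ := exists_ne (0 : ↥(P ⊓ W))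
  have hxP : x ∈ P := hxPW.1
  have hxW : x ∈ W := hxPW.2
  have hxne : x ≠ 0 := fun h => hx0 (Subtype.ext h)
  have hsupp : ∀ i, B.repr x i ≠ 0 → i ∈ T := by
    intro i hi
    have := B.toBasis.mem_span_image.mp hxP
    apply this
    rw [Finset.mem_coe, Finsupp.mem_support_iff, B.coe_toBasis_repr_apply]
    exact hi
  obtain ⟨i0, hi0⟩ : ∃ i, B.repr x i ≠ 0 := by
    by_contra hall
    push_neg at hall
    apply hxne
    have : B.repr x = 0 := by ext i; exact hall i
    simpa using congrArg B.repr.symm this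
  have hkey : ∑ v, x v * (M *ᵥ x) v < c * ∑ v, x v * x v := by
    rw [my_quad_eq hM x, my_parseval hM x x, Finset.mul_sum]
    apply Finset.sum_lt_sum
    · intro i _
      by_cases h : B.repr x i = 0
      · simp [← hBdef, h]
      · have hiT := hsupp i h
        rw [hT, Finset.mem_filter] at hiT
        have : (0:ℝ) < (B.repr x i)^2 := by positivity
        nlinarith [hiT.2]
    · refine ⟨i0, Finset.mem_univ _, ?_⟩
      have hiT := hsupp i0 hi0
      rw [hT, Finset.mem_filter] at hiT
      have : (0:ℝ) < (B.repr x i0)^2 := by positivity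
      nlinarith [hiT.2]
  exact absurd (hW x hxW) (not_le.mpr hkey)

private lemma sorted_getD_le {s : List ℝ} (hs : s.Pairwise (· ≤ ·)) {k : ℕ}
    (hk : k < s.length) {c : ℝ}
    (h : s.countP (fun x => decide (c < x)) + k + 1 ≤ s.length) :
    s.getD k 0 ≤ c := by
  by_contra hgt
  push_neg at hgt
  rw [List.getD_eq_getElem?_getD, List.getElem?_eq_getElem hk] at hgt
  simp only [Option.getD_some] at hgt
  have hcount : s.length - k ≤ s.countP (fun x => decide (c < x)) := by
    have hsplit : s = s.take k ++ s.drop k := (List.take_append_drop k s).symm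
    have hdropall : (s.drop k).countP (fun x => decide (c < x)) = (s.drop k).length := by
      rw [List.countP_eq_length]
      intro a ha
      obtain ⟨j, hj, rfl⟩ := List.mem_iff_getElem.mp ha
      rw [List.getElem_drop]
      have hkj : k + j < s.length := by
        rw [List.length_drop] at hj; omega
      have hle : s[k] ≤ s[k + j] := by
        rcases Nat.eq_or_lt_of_le (Nat.le_add_right k j) with he | hlt
        · simp [← he]
        · exact hs.rel_get_of_lt (by exact hlt)
      simpa using lt_of_lt_of_le hgt hle
    calc s.length - k = (s.drop k).length := List.length_drop.symm
      _ = (s.drop k).countP (fun x => decide (c < x)) := hdropall.symm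
      _ ≤ s.countP (fun x => decide (c < x)) := by
          conv_rhs => rw [hsplit]
          rw [List.countP_append]; omega
  omega

private lemma sorted_getD_ge {s : List ℝ} (hs : s.Pairwise (· ≤ ·)) {k : ℕ}
    (hk : k < s.length) {c : ℝ}
    (h : s.countP (fun x => decide (x < c)) ≤ k) :
    c ≤ s.getD k 0 := by
  by_contra hgt
  push_neg at hgt
  rw [List.getD_eq_getElem?_getD, List.getElem?_eq_getElem hk] at hgt
  simp only [Option.getD_some] at hgt
  have hcount : k + 1 ≤ s.countP (fun x => decide (x < c)) := by
    have hsplit : s = s.take (k+1) ++ s.drop (k+1) := (List.take_append_drop (k+1) s).symm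
    have htakeall : (s.take (k+1)).countP (fun x => decide (x < c)) = (s.take (k+1)).length := by
      rw [List.countP_eq_length]
      intro a ha
      obtain ⟨j, hj, rfl⟩ := List.mem_iff_getElem.mp ha
      rw [List.length_take] at hj
      have hjs : j < s.length := lt_of_lt_of_le (lt_of_lt_of_le hj (min_le_right _ _)) le_rfl
      rw [List.getElem_take]
      have hle : s[j] ≤ s[k] := by
        rcases Nat.eq_or_lt_of_le (Nat.le_of_lt_succ (lt_of_lt_of_le hj (min_le_left _ _))) with he | hlt
        · simp [he]
        · exact hs.rel_get_of_lt (by exact hlt)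
      simpa using lt_of_le_of_lt hle hgt
    have hlen : k + 1 ≤ (s.take (k+1)).length := by
      rw [List.length_take]; omega
    calc k + 1 ≤ (s.take (k+1)).countP (fun x => decide (x < c)) := by omega
      _ ≤ s.countP (fun x => decide (x < c)) := by
          conv_rhs => rw [hsplit]
          rw [List.countP_append]; omega
  omega

open Finset in
private lemma quad_bound {G : SimpleGraph V} [DecidableRel G.Adj] {S : Finset V}
    (hdegS : ∀ v ∈ S, (G.neighborFinset v ∩ S).card ≤ 1) (x : V → ℝ)
    (hx : ∀ v ∉ S, x v = 0) :
    |∑ v, x v * ((G.adjMatrix ℝ) *ᵥ x) v| ≤ ∑ v, x v * x v := by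
  classical
  set M' : V → V → ℝ := fun v w => if G.Adj v w ∧ v ∈ S ∧ w ∈ S then 1 else 0 with hM'
  have hterm : ∀ v w, |(G.adjMatrix ℝ) v w * (x v * x w)| ≤ M' v w * ((x v^2 + x w^2)/2) := by
    intro v w
    by_cases hadj : G.Adj v w
    · by_cases hv : v ∈ S
      · by_cases hw : w ∈ S
        · simp only [hM', SimpleGraph.adjMatrix_apply, if_pos hadj]
          rw [if_pos (show G.Adj v w ∧ v ∈ S ∧ w ∈ S from ⟨hadj, hv, hw⟩), one_mul, one_mul]
          nlinarith [sq_nonneg (|x v| - |x w|), sq_abs (x v), sq_abs (x w),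
            abs_mul (x v) (x w), abs_nonneg (x v), abs_nonneg (x w)]
        · simp [hM', hw, hx w hw]
      · simp [hM', hv, hx v hv]
    · simp [hM', hadj, SimpleGraph.adjMatrix_apply]
  have hsymm : ∀ v w, M' v w = M' w v := by
    intro v w
    simp only [hM']
    have : (G.Adj v w ∧ v ∈ S ∧ w ∈ S) ↔ (G.Adj w v ∧ w ∈ S ∧ v ∈ S) := by
      rw [G.adj_comm]; tauto
    rw [if_congr this rfl rfl]
  have hrow : ∀ v, ∑ w, M' v w ≤ 1 := by
    intro v
    by_cases hv : v ∈ S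
    · have heq : ∑ w, M' v w = ((univ.filter fun w => G.Adj v w ∧ v ∈ S ∧ w ∈ S).card : ℝ) :=
        Finset.sum_boole _ _
      have hfe : (univ.filter fun w => G.Adj v w ∧ v ∈ S ∧ w ∈ S) = G.neighborFinset v ∩ S := by
        ext w
        simp only [Finset.mem_filter, Finset.mem_univ, true_and, Finset.mem_inter,
          SimpleGraph.mem_neighborFinset]
        tauto
      rw [heq, hfe]
      exact_mod_cast hdegS v hv
    · have : ∀ w, M' v w = 0 := by intro w; simp [hM', hv]
      simp [this]
  have hexpand : ∑ v, x v * ((G.adjMatrix ℝ) *ᵥ x) v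
      = ∑ v, ∑ w, (G.adjMatrix ℝ) v w * (x v * x w) := by
    refine Finset.sum_congr rfl fun v _ => ?_
    rw [show ((G.adjMatrix ℝ) *ᵥ x) v = ∑ w, (G.adjMatrix ℝ) v w * x w from rfl,
      Finset.mul_sum]
    refine Finset.sum_congr rfl fun w _ => by ring
  rw [hexpand]
  have habs : |∑ v, ∑ w, (G.adjMatrix ℝ) v w * (x v * x w)|
      ≤ ∑ v, ∑ w, M' v w * ((x v^2 + x w^2)/2) := by
    calc |∑ v, ∑ w, (G.adjMatrix ℝ) v w * (x v * x w)|
        ≤ ∑ v, |∑ w, (G.adjMatrix ℝ) v w * (x v * x w)| := Finset.abs_sum_le_sum_abs _ _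
      _ ≤ ∑ v, ∑ w, |(G.adjMatrix ℝ) v w * (x v * x w)| := by
          exact Finset.sum_le_sum fun v _ => Finset.abs_sum_le_sum_abs _ _
      _ ≤ ∑ v, ∑ w, M' v w * ((x v^2 + x w^2)/2) :=
          Finset.sum_le_sum fun v _ => Finset.sum_le_sum fun w _ => hterm v w
  refine le_trans habs ?_
  have hsplit : ∑ v, ∑ w, M' v w * ((x v^2 + x w^2)/2)
      = ∑ v, x v^2 * ∑ w, M' v w := by
    have h1 : ∑ v, ∑ w, M' v w * ((x v^2 + x w^2)/2)
        = (∑ v, ∑ w, M' v w * x v^2)/2 + (∑ v, ∑ w, M' v w * x w^2)/2 := by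
      have e : ∀ v w, M' v w * ((x v^2 + x w^2)/2)
          = M' v w * x v ^ 2 / 2 + M' v w * x w ^ 2 / 2 := fun v w => by ring
      simp_rw [e, Finset.sum_add_distrib, Finset.sum_div]
    have h2 : ∑ v, ∑ w, M' v w * x w^2 = ∑ v, ∑ w, M' v w * x v^2 := by
      rw [Finset.sum_comm]
      refine Finset.sum_congr rfl fun v _ => Finset.sum_congr rfl fun w _ => by
        rw [hsymm v w]
    have h3 : ∑ v, ∑ w, M' v w * x v ^ 2 = ∑ v, x v^2 * ∑ w, M' v w :=
      Finset.sum_congr rfl fun v _ => by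
        rw [Finset.mul_sum]
        exact Finset.sum_congr rfl fun w _ => by ring
    rw [h1, h2, h3]
    ring
  rw [hsplit]
  refine Finset.sum_le_sum fun v _ => ?_
  have := hrow v
  nlinarith [sq_nonneg (x v)]

end Aux

theorem hl_index_le_one_of_unbalanced_unfriendly
    {V : Type} [Fintype V] [DecidableEq V]
    (G : SimpleGraph V) [DecidableRel G.Adj]
    (hdeg : ∀ v : V, G.degree v ≤ 3) (A : Finset V)
    (hA : ∀ v ∈ A, (G.neighborFinset v ∩ A).card ≤ (G.neighborFinset v ∩ Aᶜ).card)
    (hB : ∀ v ∈ Aᶜ, (G.neighborFinset v ∩ Aᶜ).card ≤ (G.neighborFinset v ∩ A).card)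
    (hunbal : A.card ≠ Aᶜ.card) :
    |eigval G ((Fintype.card V + 1) / 2)| ≤ 1 ∧
    |eigval G ((Fintype.card V + 2) / 2)| ≤ 1 := by
  classical
  set n := Fintype.card V with hn
  set hM := adjMatrix_isHermitian G with hMdef
  -- choose the big side
  obtain ⟨S, hSfriend, hScard⟩ : ∃ S : Finset V,
      (∀ v ∈ S, (G.neighborFinset v ∩ S).card ≤ (G.neighborFinset v ∩ Sᶜ).card) ∧
      n < 2 * S.card := by
    have hsum : A.card + Aᶜ.card = n := Finset.card_add_card_compl A
    rcases lt_or_gt_of_ne hunbal with h | h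
    · exact ⟨Aᶜ, fun v hv => by simpa [compl_compl] using hB v hv, by omega⟩
    · exact ⟨A, hA, by omega⟩
  have hSn : S.card ≤ n := Finset.card_le_univ S
  have hn1 : 1 ≤ n := by omega
  -- degree inside S is at most 1
  have hdegS : ∀ v ∈ S, (G.neighborFinset v ∩ S).card ≤ 1 := by
    intro v hv
    have h1 := hSfriend v hv
    have h2 : (G.neighborFinset v ∩ S).card + (G.neighborFinset v ∩ Sᶜ).card
        = G.degree v := by
      rw [← SimpleGraph.card_neighborFinset_eq_degree]
      rw [← Finset.card_inter_add_card_sdiff (G.neighborFinset v) S, sdiff_eq, Finset.inf_eq_inter]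
    have h3 := hdeg v
    omega
  -- the subspace W
  set B0 := EuclideanSpace.basisFun V ℝ with hB0
  set W : Submodule ℝ (EuclideanSpace ℝ V) :=
    Submodule.span ℝ (⇑B0.toBasis '' ↑S) with hW
  have hli : LinearIndependent ℝ (fun i : (↑S : Set V) => B0.toBasis i) :=
    B0.toBasis.linearIndependent.comp _ Subtype.val_injective
  have hWrank : Module.finrank ℝ W = S.card := by
    rw [hW, Set.image_eq_range, finrank_span_eq_card hli, ← Set.toFinset_card]
    simp
  have hWsupp : ∀ x ∈ W, ∀ v ∉ S, x v = 0 := by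
    intro x hx v hv
    have hsub := B0.toBasis.mem_span_image.mp hx
    by_contra h0
    exact hv (hsub (by
      rw [Finset.mem_coe, Finsupp.mem_support_iff, B0.coe_toBasis_repr_apply,
        EuclideanSpace.basisFun_repr]
      exact h0))
  -- quadratic bounds on W
  have hquad : ∀ x ∈ W, |∑ v, x v * ((G.adjMatrix ℝ) *ᵥ x) v| ≤ ∑ v, x v * x v :=
    fun x hx => quad_bound hdegS x (hWsupp x hx)
  have hcount1 : (Finset.univ.filter fun i => (1:ℝ) < hM.eigenvalues i).card + S.card ≤ n := by
    rw [← hWrank]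
    apply count_eig_gt hM 1 W
    intro x hx
    have := hquad x hx
    rw [one_mul]
    exact le_trans (le_abs_self _) this
  have hcount2 : (Finset.univ.filter fun i => hM.eigenvalues i < (-1:ℝ)).card + S.card ≤ n := by
    rw [← hWrank]
    apply count_eig_lt hM (-1) W
    intro x hx
    have := hquad x hx
    have h2 := neg_abs_le (∑ v, x v * ((G.adjMatrix ℝ) *ᵥ x) v)
    nlinarith
  -- transfer counts to the sorted list
  set L := ((adjSpectrum G).sort (· ≤ ·)) with hL
  have hLsorted : L.Pairwise (· ≤ ·) := Multiset.pairwise_sort _ _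
  have hLlen : L.length = n := by
    rw [hL, Multiset.length_sort, adjSpectrum, Multiset.card_map]
    simp [hn]
  have hcountP : ∀ (p : ℝ → Prop) [DecidablePred p],
      L.countP (fun x => decide (p x)) = (Finset.univ.filter fun i => p (hM.eigenvalues i)).card := by
    intro p hp
    have h1 : (L.countP fun x => decide (p x)) = Multiset.countP p (adjSpectrum G) := by
      rw [hL, ← Multiset.coe_countP, Multiset.sort_eq]
    rw [h1, adjSpectrum, Multiset.countP_map]
    rfl
  have hm1 : L.countP (fun x => decide ((1:ℝ) < x)) + S.card ≤ n := by
    rw [hcountP (fun x => (1:ℝ) < x)]; exact hcount1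
  have hm2 : L.countP (fun x => decide (x < (-1:ℝ))) + S.card ≤ n := by
    rw [hcountP (fun x => x < (-1:ℝ))]; exact hcount2
  have habs : ∀ k : ℕ, k < n →
      L.countP (fun x => decide ((1:ℝ) < x)) + k + 1 ≤ n →
      L.countP (fun x => decide (x < (-1:ℝ))) ≤ k →
      |L.getD k 0| ≤ 1 := by
    intro k hk hc1 hc2
    rw [abs_le]
    constructor
    · exact sorted_getD_ge hLsorted (by omega) (by omega)
    · exact sorted_getD_le hLsorted (by omega) (by omega)
  constructor
  · -- eigval at (n+1)/2, index n - (n+1)/2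
    show |L.getD (n - (n+1)/2) 0| ≤ 1
    exact habs _ (by omega) (by omega) (by omega)
  · show |L.getD (n - (n+2)/2) 0| ≤ 1
    exact habs _ (by omega) (by omega) (by omega)
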